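/- Let C = F⃗ a F⃗ be a double coset of Jones' subgroup F⃗ in F, and let w = x_{i_1}⋯x_{i_n} (with i_1 ≤ ⋯ ≤ i_n and n = |w|) be a positive element of C whose length is minimal among the lengths of elements of C. Then w contains no block: no contiguous subword x_{i_p}⋯x_{i_q} (1 ≤ p ≤ q ≤ n) of w is a block. -/

import Mathlib

set_option maxHeartbeats 1000000

noncomputable section

/-- The unit interval `[0,1]` as a type. -/
abbrev I : Type := Set.Icc (0:ℝ) 1

/-- The underlying function of the generator `x₀` of Thompson's group `F`. -/
def x0fun (t : ℝ) : ℝ := if t ≤ 1/4 then 2*t else if t ≤ 1/2 then t + 1/4 else t/2 + 1/2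

/-- The inverse of `x0fun`. -/
def x0inv (t : ℝ) : ℝ := if t ≤ 1/2 then t/2 else if t ≤ 3/4 then t - 1/4 else 2*t - 1

/-- The underlying function of the generator `x₁` of Thompson's group `F`. -/
def x1fun (t : ℝ) : ℝ :=
  if t ≤ 1/2 then t else if t ≤ 5/8 then 2*t - 1/2 else if t ≤ 3/4 then t + 1/8 else t/2 + 1/2

/-- The inverse of `x1fun`. -/
def x1inv (t : ℝ) : ℝ :=
  if t ≤ 1/2 then t else if t ≤ 3/4 then t/2 + 1/4 else if t ≤ 7/8 then t - 1/8 else 2*t - 1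

/-- The generator `x₀` of Thompson's group `F`, as a bijection of `[0,1]`. -/
def x₀ : Equiv.Perm I where
  toFun t := ⟨x0fun t.1, by
    obtain ⟨h0, h1⟩ := Set.mem_Icc.mp t.2
    simp only [Set.mem_Icc, x0fun]
    split_ifs <;> constructor <;> linarith⟩
  invFun t := ⟨x0inv t.1, by
    obtain ⟨h0, h1⟩ := Set.mem_Icc.mp t.2
    simp only [Set.mem_Icc, x0inv]
    split_ifs <;> constructor <;> linarith⟩
  left_inv t := by
    obtain ⟨h0, h1⟩ := Set.mem_Icc.mp t.2
    apply Subtype.ext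
    show x0inv (x0fun t.1) = t.1
    simp only [x0fun, x0inv]
    split_ifs <;> linarith
  right_inv t := by
    obtain ⟨h0, h1⟩ := Set.mem_Icc.mp t.2
    apply Subtype.ext
    show x0fun (x0inv t.1) = t.1
    simp only [x0fun, x0inv]
    split_ifs <;> linarith

/-- The generator `x₁` of Thompson's group `F`, as a bijection of `[0,1]`. -/
def x₁ : Equiv.Perm I where
  toFun t := ⟨x1fun t.1, by
    obtain ⟨h0, h1⟩ := Set.mem_Icc.mp t.2
    simp only [Set.mem_Icc, x1fun]
    split_ifs <;> constructor <;> linarith⟩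
  invFun t := ⟨x1inv t.1, by
    obtain ⟨h0, h1⟩ := Set.mem_Icc.mp t.2
    simp only [Set.mem_Icc, x1inv]
    split_ifs <;> constructor <;> linarith⟩
  left_inv t := by
    obtain ⟨h0, h1⟩ := Set.mem_Icc.mp t.2
    apply Subtype.ext
    show x1inv (x1fun t.1) = t.1
    simp only [x1fun, x1inv]
    split_ifs <;> linarith
  right_inv t := by
    obtain ⟨h0, h1⟩ := Set.mem_Icc.mp t.2
    apply Subtype.ext
    show x1fun (x1inv t.1) = t.1
    simp only [x1fun, x1inv]
    split_ifs <;> linarith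

/-- Composition in Thompson's group `F` is from left to right: the product `f·g` in the paper
is the function `t ↦ g (f t)`.  In Lean, `Equiv.Perm` multiplication is composition from right
to left: `(f * g) t = f (g t)`.  Hence a paper product `a₁ a₂ ⋯ aₙ` corresponds to the Lean
product `aₙ * ⋯ * a₂ * a₁`.

`x i` is the standard generator `x_i` of Thompson's group `F`: here `x_0, x_1` are the explicit
piecewise-linear maps, and for `i ≥ 1`, `x_{i+1} = x_0^{-i} x_1 x_0^{i}` (left-to-right
composition), which in Lean's convention is `x₀ ^ i * x₁ * (x₀ ^ i)⁻¹`. -/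
def x (i : ℕ) : Equiv.Perm I := if i = 0 then x₀ else x₀ ^ (i-1) * x₁ * (x₀ ^ (i-1))⁻¹

/-- Thompson's group `F`, realized as the group of increasing piecewise-linear homeomorphisms of
`[0,1]` with dyadic breakpoints and slopes powers of 2; it is generated by `x_0` and `x_1`. -/
def F : Subgroup (Equiv.Perm I) := Subgroup.closure {x 0, x 1}

/-- The subgroup `G = ⟨x_0x_2, x_1x_2⟩` of `F` (products written left-to-right, so
`x_0x_2` is the Lean element `x 2 * x 0`). -/
def G : Subgroup (Equiv.Perm I) := Subgroup.closure {x 2 * x 0, x 2 * x 1}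

/-- Jones' subgroup `F⃗ = ⟨x_0x_1, x_1x_2, x_2x_3⟩` of `F` (products written left-to-right). -/
def JonesF : Subgroup (Equiv.Perm I) := Subgroup.closure {x 1 * x 0, x 2 * x 1, x 3 * x 2}

lemma x_mem_F (i : ℕ) : x i ∈ F := by
  have h0 : x 0 ∈ F := Subgroup.subset_closure (by simp)
  have h1 : x 1 ∈ F := Subgroup.subset_closure (by simp)
  have hx0 : x₀ ∈ F := by simpa [x] using h0
  have hx1 : x₁ ∈ F := by simpa [x] using h1
  rcases Nat.eq_zero_or_pos i with h | h
  · subst h; exact h0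
  · have : x i = x₀ ^ (i-1) * x₁ * (x₀ ^ (i-1))⁻¹ := by
      simp [x, Nat.pos_iff_ne_zero.mp h]
    rw [this]
    exact mul_mem (mul_mem (pow_mem hx0 _) hx1) (inv_mem (pow_mem hx0 _))

lemma y0_mem_G : x 2 * x 0 ∈ G := Subgroup.subset_closure (by simp)

lemma y1_mem_G : x 2 * x 1 ∈ G := Subgroup.subset_closure (by simp)

/-- The length `|w|` of an element of `F`: the minimal `n` such that `w` is a product of `n`
elements of `{x_i^{±1} : i ≥ 0}`.  This equals the length of the normal form of `w`. -/
def len (w : Equiv.Perm I) : ℕ :=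
  sInf {n | ∃ l : List (Equiv.Perm I), l.length = n ∧
    (∀ a ∈ l, ∃ i : ℕ, a = x i ∨ a = (x i)⁻¹) ∧ l.prod = w}

/-- The element of `F` given by the positive word `x_{i_1} x_{i_2} ⋯ x_{i_n}` (composition from
left to right), where `l = [i_1, i_2, …, i_n]`.  Since Lean's multiplication of permutations is
composition from right to left, this is the Lean product of the reversed list of letters. -/
def pp (l : List ℕ) : Equiv.Perm I := ((l.map x).reverse).prod

/-- `l = [i_1, …, i_n]` encodes a *block*: a positive normal form `x_{i_1}⋯x_{i_n}`
(so `i_1 ≤ ⋯ ≤ i_n`) with `i_1 ≠ i_n` and `i_j < i_1 + j` for all `j = 1, …, n`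
(here with 0-based indexing: `l[k] < l[0] + k + 1`). -/
def IsBlock (l : List ℕ) : Prop :=
  l ≠ [] ∧ l.Pairwise (· ≤ ·) ∧ l.headI ≠ l.getLastD 0 ∧
    ∀ k < l.length, l.getD k 0 < l.headI + k + 1

/-- The double coset `F⃗ a F⃗` of Jones' subgroup.  (As a set this does not depend on the
composition convention, since `u, v` range over all of `F⃗`.) -/
def dCoset (a : Equiv.Perm I) : Set (Equiv.Perm I) :=
  {w | ∃ u ∈ JonesF, ∃ v ∈ JonesF, w = v * a * u}

/-- A real number is dyadic if it has the form `a / 2^n` with `a, n` natural numbers. -/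
def IsDyadic (α : ℝ) : Prop := ∃ (a : ℕ) (n : ℕ), α = a / 2^n

/-- The subgroup of all permutations fixing every point of `U`. -/
def fixing (U : Set ℝ) : Subgroup (Equiv.Perm I) where
  carrier := {g | ∀ t : I, (t : ℝ) ∈ U → g t = t}
  one_mem' := fun _ _ => rfl
  mul_mem' := by
    intro a b ha hb t ht
    simp only [Equiv.Perm.mul_apply]
    rw [hb t ht, ha t ht]
  inv_mem' := by
    intro a ha t ht
    conv_lhs => rw [← ha t ht]
    exact a.symm_apply_apply t

/-- `H_U`: the stabilizer in `F` of the finite set `U ⊂ (0,1)`, i.e. the subgroup of all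
elements of `F` fixing every point of `U`. -/
def HU (U : Set ℝ) : Subgroup (Equiv.Perm I) := F ⊓ fixing U

/-! ### Auxiliary machinery for Statement 9 -/

section Aux

/-! #### Evaluation lemmas for the generators -/

lemma x₀_apply (t : I) : ((x₀ t : I) : ℝ) = x0fun t := rfl
lemma x₁_apply (t : I) : ((x₁ t : I) : ℝ) = x1fun t := rfl
lemma x₀_inv_apply (t : I) : (((x₀⁻¹ : Equiv.Perm I) t : I) : ℝ) = x0inv t := rfl
lemma x₁_inv_apply (t : I) : (((x₁⁻¹ : Equiv.Perm I) t : I) : ℝ) = x1inv t := rfl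

lemma E2_real (t : ℝ) (h0 : 0 ≤ t) (h1 : t ≤ 1) :
    x1fun (x0fun (x1fun (x0inv (x1inv (t))))) = x0fun (x0fun (x1fun (x0inv (x0inv (t))))) := by
  rcases le_or_gt t (1/2) with hA0 | hA0
  ·
    rw [show x1inv (t) = 1 * t + 0 by simp only [x1inv]; rw [if_pos (by linarith)] <;> ring]
    rw [show x0inv (1 * t + 0) = (1/2) * t + 0 by simp only [x0inv]; rw [if_pos (by linarith)] <;> ring]
    rw [show x1fun ((1/2) * t + 0) = (1/2) * t + 0 by simp only [x1fun]; rw [if_pos (by linarith)] <;> ring]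
    rw [show x0fun ((1/2) * t + 0) = 1 * t + 0 by simp only [x0fun]; rw [if_pos (by linarith)] <;> ring]
    rw [show x1fun (1 * t + 0) = 1 * t + 0 by simp only [x1fun]; rw [if_pos (by linarith)] <;> ring]
    rw [show x0inv (t) = 0 + (1/2) * t by simp only [x0inv]; rw [if_pos (by linarith)] <;> ring]
    rw [show x0inv (0 + (1/2) * t) = 0 + (1/4) * t by simp only [x0inv]; rw [if_pos (by linarith)] <;> ring]
    rw [show x1fun (0 + (1/4) * t) = 0 + (1/4) * t by simp only [x1fun]; rw [if_pos (by linarith)] <;> ring]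
    rw [show x0fun (0 + (1/4) * t) = 0 + (1/2) * t by simp only [x0fun]; rw [if_pos (by linarith)] <;> ring]
    rw [show x0fun (0 + (1/2) * t) = 0 + 1 * t by simp only [x0fun]; rw [if_pos (by linarith)] <;> ring]
    linarith
  ·
    rcases le_or_gt t (3/4) with hA1 | hA1
    ·
      rw [show x1inv (t) = (1/2) * t + (1/4) by simp only [x1inv]; rw [if_neg (by linarith), if_pos (by linarith)] <;> ring]
      rw [show x0inv ((1/2) * t + (1/4)) = (1/2) * t + 0 by simp only [x0inv]; rw [if_neg (by linarith), if_pos (by linarith)] <;> ring]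
      rw [show x1fun ((1/2) * t + 0) = (1/2) * t + 0 by simp only [x1fun]; rw [if_pos (by linarith)] <;> ring]
      rw [show x0fun ((1/2) * t + 0) = (1/2) * t + (1/4) by simp only [x0fun]; rw [if_neg (by linarith), if_pos (by linarith)] <;> ring]
      rw [show x1fun ((1/2) * t + (1/4)) = 1 * t + 0 by simp only [x1fun]; rw [if_neg (by linarith), if_pos (by linarith)] <;> ring]
      rw [show x0inv (t) = (-1/4) + 1 * t by simp only [x0inv]; rw [if_neg (by linarith), if_pos (by linarith)] <;> ring]
      rw [show x0inv ((-1/4) + 1 * t) = (-1/8) + (1/2) * t by simp only [x0inv]; rw [if_pos (by linarith)] <;> ring]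
      rw [show x1fun ((-1/8) + (1/2) * t) = (-1/8) + (1/2) * t by simp only [x1fun]; rw [if_pos (by linarith)] <;> ring]
      rw [show x0fun ((-1/8) + (1/2) * t) = (-1/4) + 1 * t by simp only [x0fun]; rw [if_pos (by linarith)] <;> ring]
      rw [show x0fun ((-1/4) + 1 * t) = 0 + 1 * t by simp only [x0fun]; rw [if_neg (by linarith), if_pos (by linarith)] <;> ring]
      linarith
    ·
      rcases le_or_gt t (7/8) with hA2 | hA2
      ·
        rw [show x1inv (t) = 1 * t + (-1/8) by simp only [x1inv]; rw [if_neg (by linarith), if_neg (by linarith), if_pos (by linarith)] <;> ring]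
        rw [show x0inv (1 * t + (-1/8)) = 1 * t + (-3/8) by simp only [x0inv]; rw [if_neg (by linarith), if_pos (by linarith)] <;> ring]
        rw [show x1fun (1 * t + (-3/8)) = 1 * t + (-3/8) by simp only [x1fun]; rw [if_pos (by linarith)] <;> ring]
        rw [show x0fun (1 * t + (-3/8)) = 1 * t + (-1/8) by simp only [x0fun]; rw [if_neg (by linarith), if_pos (by linarith)] <;> ring]
        rw [show x1fun (1 * t + (-1/8)) = 1 * t + 0 by simp only [x1fun]; rw [if_neg (by linarith), if_neg (by linarith), if_pos (by linarith)] <;> ring]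
        rw [show x0inv (t) = (-1) + 2 * t by simp only [x0inv]; rw [if_neg (by linarith), if_neg (by linarith)] <;> ring]
        rw [show x0inv ((-1) + 2 * t) = (-5/4) + 2 * t by simp only [x0inv]; rw [if_neg (by linarith), if_pos (by linarith)] <;> ring]
        rw [show x1fun ((-5/4) + 2 * t) = (-5/4) + 2 * t by simp only [x1fun]; rw [if_pos (by linarith)] <;> ring]
        rw [show x0fun ((-5/4) + 2 * t) = (-1) + 2 * t by simp only [x0fun]; rw [if_neg (by linarith), if_pos (by linarith)] <;> ring]
        rw [show x0fun ((-1) + 2 * t) = 0 + 1 * t by simp only [x0fun]; rw [if_neg (by linarith), if_neg (by linarith)] <;> ring]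
        linarith
      ·
        rcases le_or_gt t (29/32) with hA3 | hA3
        ·
          rw [show x1inv (t) = 2 * t + (-1) by simp only [x1inv]; rw [if_neg (by linarith), if_neg (by linarith), if_neg (by linarith)] <;> ring]
          rw [show x0inv (2 * t + (-1)) = 4 * t + (-3) by simp only [x0inv]; rw [if_neg (by linarith), if_neg (by linarith)] <;> ring]
          rw [show x1fun (4 * t + (-3)) = 8 * t + (-13/2) by simp only [x1fun]; rw [if_neg (by linarith), if_pos (by linarith)] <;> ring]
          rw [show x0fun (8 * t + (-13/2)) = 4 * t + (-11/4) by simp only [x0fun]; rw [if_neg (by linarith), if_neg (by linarith)] <;> ring]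
          rw [show x1fun (4 * t + (-11/4)) = 2 * t + (-7/8) by simp only [x1fun]; rw [if_neg (by linarith), if_neg (by linarith), if_neg (by linarith)] <;> ring]
          rw [show x0inv (t) = (-1) + 2 * t by simp only [x0inv]; rw [if_neg (by linarith), if_neg (by linarith)] <;> ring]
          rw [show x0inv ((-1) + 2 * t) = (-3) + 4 * t by simp only [x0inv]; rw [if_neg (by linarith), if_neg (by linarith)] <;> ring]
          rw [show x1fun ((-3) + 4 * t) = (-13/2) + 8 * t by simp only [x1fun]; rw [if_neg (by linarith), if_pos (by linarith)] <;> ring]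
          rw [show x0fun ((-13/2) + 8 * t) = (-11/4) + 4 * t by simp only [x0fun]; rw [if_neg (by linarith), if_neg (by linarith)] <;> ring]
          rw [show x0fun ((-11/4) + 4 * t) = (-7/8) + 2 * t by simp only [x0fun]; rw [if_neg (by linarith), if_neg (by linarith)] <;> ring]
          linarith
        ·
          rcases le_or_gt t (15/16) with hA4 | hA4
          ·
            rw [show x1inv (t) = 2 * t + (-1) by simp only [x1inv]; rw [if_neg (by linarith), if_neg (by linarith), if_neg (by linarith)] <;> ring]
            rw [show x0inv (2 * t + (-1)) = 4 * t + (-3) by simp only [x0inv]; rw [if_neg (by linarith), if_neg (by linarith)] <;> ring]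
            rw [show x1fun (4 * t + (-3)) = 4 * t + (-23/8) by simp only [x1fun]; rw [if_neg (by linarith), if_neg (by linarith), if_pos (by linarith)] <;> ring]
            rw [show x0fun (4 * t + (-23/8)) = 2 * t + (-15/16) by simp only [x0fun]; rw [if_neg (by linarith), if_neg (by linarith)] <;> ring]
            rw [show x1fun (2 * t + (-15/16)) = 1 * t + (1/32) by simp only [x1fun]; rw [if_neg (by linarith), if_neg (by linarith), if_neg (by linarith)] <;> ring]
            rw [show x0inv (t) = (-1) + 2 * t by simp only [x0inv]; rw [if_neg (by linarith), if_neg (by linarith)] <;> ring]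
            rw [show x0inv ((-1) + 2 * t) = (-3) + 4 * t by simp only [x0inv]; rw [if_neg (by linarith), if_neg (by linarith)] <;> ring]
            rw [show x1fun ((-3) + 4 * t) = (-23/8) + 4 * t by simp only [x1fun]; rw [if_neg (by linarith), if_neg (by linarith), if_pos (by linarith)] <;> ring]
            rw [show x0fun ((-23/8) + 4 * t) = (-15/16) + 2 * t by simp only [x0fun]; rw [if_neg (by linarith), if_neg (by linarith)] <;> ring]
            rw [show x0fun ((-15/16) + 2 * t) = (1/32) + 1 * t by simp only [x0fun]; rw [if_neg (by linarith), if_neg (by linarith)] <;> ring]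
            linarith
          ·
            rw [show x1inv (t) = 2 * t + (-1) by simp only [x1inv]; rw [if_neg (by linarith), if_neg (by linarith), if_neg (by linarith)] <;> ring]
            rw [show x0inv (2 * t + (-1)) = 4 * t + (-3) by simp only [x0inv]; rw [if_neg (by linarith), if_neg (by linarith)] <;> ring]
            rw [show x1fun (4 * t + (-3)) = 2 * t + (-1) by simp only [x1fun]; rw [if_neg (by linarith), if_neg (by linarith), if_neg (by linarith)] <;> ring]
            rw [show x0fun (2 * t + (-1)) = 1 * t + 0 by simp only [x0fun]; rw [if_neg (by linarith), if_neg (by linarith)] <;> ring]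
            rw [show x1fun (1 * t + 0) = (1/2) * t + (1/2) by simp only [x1fun]; rw [if_neg (by linarith), if_neg (by linarith), if_neg (by linarith)] <;> ring]
            rw [show x0inv (t) = (-1) + 2 * t by simp only [x0inv]; rw [if_neg (by linarith), if_neg (by linarith)] <;> ring]
            rw [show x0inv ((-1) + 2 * t) = (-3) + 4 * t by simp only [x0inv]; rw [if_neg (by linarith), if_neg (by linarith)] <;> ring]
            rw [show x1fun ((-3) + 4 * t) = (-1) + 2 * t by simp only [x1fun]; rw [if_neg (by linarith), if_neg (by linarith), if_neg (by linarith)] <;> ring]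
            rw [show x0fun ((-1) + 2 * t) = 0 + 1 * t by simp only [x0fun]; rw [if_neg (by linarith), if_neg (by linarith)] <;> ring]
            rw [show x0fun (0 + 1 * t) = (1/2) + (1/2) * t by simp only [x0fun]; rw [if_neg (by linarith), if_neg (by linarith)] <;> ring]
            linarith

lemma E3_real (t : ℝ) (h0 : 0 ≤ t) (h1 : t ≤ 1) :
    x1fun (x0fun (x0fun (x1fun (x0inv (x0inv (x1inv (t))))))) = x0fun (x0fun (x0fun (x1fun (x0inv (x0inv (x0inv (t))))))) := by
  rcases le_or_gt t (1/2) with hA0 | hA0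
  ·
    rw [show x1inv (t) = 1 * t + 0 by simp only [x1inv]; rw [if_pos (by linarith)] <;> ring]
    rw [show x0inv (1 * t + 0) = (1/2) * t + 0 by simp only [x0inv]; rw [if_pos (by linarith)] <;> ring]
    rw [show x0inv ((1/2) * t + 0) = (1/4) * t + 0 by simp only [x0inv]; rw [if_pos (by linarith)] <;> ring]
    rw [show x1fun ((1/4) * t + 0) = (1/4) * t + 0 by simp only [x1fun]; rw [if_pos (by linarith)] <;> ring]
    rw [show x0fun ((1/4) * t + 0) = (1/2) * t + 0 by simp only [x0fun]; rw [if_pos (by linarith)] <;> ring]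
    rw [show x0fun ((1/2) * t + 0) = 1 * t + 0 by simp only [x0fun]; rw [if_pos (by linarith)] <;> ring]
    rw [show x1fun (1 * t + 0) = 1 * t + 0 by simp only [x1fun]; rw [if_pos (by linarith)] <;> ring]
    rw [show x0inv (t) = 0 + (1/2) * t by simp only [x0inv]; rw [if_pos (by linarith)] <;> ring]
    rw [show x0inv (0 + (1/2) * t) = 0 + (1/4) * t by simp only [x0inv]; rw [if_pos (by linarith)] <;> ring]
    rw [show x0inv (0 + (1/4) * t) = 0 + (1/8) * t by simp only [x0inv]; rw [if_pos (by linarith)] <;> ring]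
    rw [show x1fun (0 + (1/8) * t) = 0 + (1/8) * t by simp only [x1fun]; rw [if_pos (by linarith)] <;> ring]
    rw [show x0fun (0 + (1/8) * t) = 0 + (1/4) * t by simp only [x0fun]; rw [if_pos (by linarith)] <;> ring]
    rw [show x0fun (0 + (1/4) * t) = 0 + (1/2) * t by simp only [x0fun]; rw [if_pos (by linarith)] <;> ring]
    rw [show x0fun (0 + (1/2) * t) = 0 + 1 * t by simp only [x0fun]; rw [if_pos (by linarith)] <;> ring]
    linarith
  ·
    rcases le_or_gt t (3/4) with hA1 | hA1
    ·
      rw [show x1inv (t) = (1/2) * t + (1/4) by simp only [x1inv]; rw [if_neg (by linarith), if_pos (by linarith)] <;> ring]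
      rw [show x0inv ((1/2) * t + (1/4)) = (1/2) * t + 0 by simp only [x0inv]; rw [if_neg (by linarith), if_pos (by linarith)] <;> ring]
      rw [show x0inv ((1/2) * t + 0) = (1/4) * t + 0 by simp only [x0inv]; rw [if_pos (by linarith)] <;> ring]
      rw [show x1fun ((1/4) * t + 0) = (1/4) * t + 0 by simp only [x1fun]; rw [if_pos (by linarith)] <;> ring]
      rw [show x0fun ((1/4) * t + 0) = (1/2) * t + 0 by simp only [x0fun]; rw [if_pos (by linarith)] <;> ring]
      rw [show x0fun ((1/2) * t + 0) = (1/2) * t + (1/4) by simp only [x0fun]; rw [if_neg (by linarith), if_pos (by linarith)] <;> ring]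
      rw [show x1fun ((1/2) * t + (1/4)) = 1 * t + 0 by simp only [x1fun]; rw [if_neg (by linarith), if_pos (by linarith)] <;> ring]
      rw [show x0inv (t) = (-1/4) + 1 * t by simp only [x0inv]; rw [if_neg (by linarith), if_pos (by linarith)] <;> ring]
      rw [show x0inv ((-1/4) + 1 * t) = (-1/8) + (1/2) * t by simp only [x0inv]; rw [if_pos (by linarith)] <;> ring]
      rw [show x0inv ((-1/8) + (1/2) * t) = (-1/16) + (1/4) * t by simp only [x0inv]; rw [if_pos (by linarith)] <;> ring]
      rw [show x1fun ((-1/16) + (1/4) * t) = (-1/16) + (1/4) * t by simp only [x1fun]; rw [if_pos (by linarith)] <;> ring]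
      rw [show x0fun ((-1/16) + (1/4) * t) = (-1/8) + (1/2) * t by simp only [x0fun]; rw [if_pos (by linarith)] <;> ring]
      rw [show x0fun ((-1/8) + (1/2) * t) = (-1/4) + 1 * t by simp only [x0fun]; rw [if_pos (by linarith)] <;> ring]
      rw [show x0fun ((-1/4) + 1 * t) = 0 + 1 * t by simp only [x0fun]; rw [if_neg (by linarith), if_pos (by linarith)] <;> ring]
      linarith
    ·
      rcases le_or_gt t (7/8) with hA2 | hA2
      ·
        rw [show x1inv (t) = 1 * t + (-1/8) by simp only [x1inv]; rw [if_neg (by linarith), if_neg (by linarith), if_pos (by linarith)] <;> ring]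
        rw [show x0inv (1 * t + (-1/8)) = 1 * t + (-3/8) by simp only [x0inv]; rw [if_neg (by linarith), if_pos (by linarith)] <;> ring]
        rw [show x0inv (1 * t + (-3/8)) = (1/2) * t + (-3/16) by simp only [x0inv]; rw [if_pos (by linarith)] <;> ring]
        rw [show x1fun ((1/2) * t + (-3/16)) = (1/2) * t + (-3/16) by simp only [x1fun]; rw [if_pos (by linarith)] <;> ring]
        rw [show x0fun ((1/2) * t + (-3/16)) = 1 * t + (-3/8) by simp only [x0fun]; rw [if_pos (by linarith)] <;> ring]
        rw [show x0fun (1 * t + (-3/8)) = 1 * t + (-1/8) by simp only [x0fun]; rw [if_neg (by linarith), if_pos (by linarith)] <;> ring]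
        rw [show x1fun (1 * t + (-1/8)) = 1 * t + 0 by simp only [x1fun]; rw [if_neg (by linarith), if_neg (by linarith), if_pos (by linarith)] <;> ring]
        rw [show x0inv (t) = (-1) + 2 * t by simp only [x0inv]; rw [if_neg (by linarith), if_neg (by linarith)] <;> ring]
        rw [show x0inv ((-1) + 2 * t) = (-5/4) + 2 * t by simp only [x0inv]; rw [if_neg (by linarith), if_pos (by linarith)] <;> ring]
        rw [show x0inv ((-5/4) + 2 * t) = (-5/8) + 1 * t by simp only [x0inv]; rw [if_pos (by linarith)] <;> ring]
        rw [show x1fun ((-5/8) + 1 * t) = (-5/8) + 1 * t by simp only [x1fun]; rw [if_pos (by linarith)] <;> ring]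
        rw [show x0fun ((-5/8) + 1 * t) = (-5/4) + 2 * t by simp only [x0fun]; rw [if_pos (by linarith)] <;> ring]
        rw [show x0fun ((-5/4) + 2 * t) = (-1) + 2 * t by simp only [x0fun]; rw [if_neg (by linarith), if_pos (by linarith)] <;> ring]
        rw [show x0fun ((-1) + 2 * t) = 0 + 1 * t by simp only [x0fun]; rw [if_neg (by linarith), if_neg (by linarith)] <;> ring]
        linarith
      ·
        rcases le_or_gt t (15/16) with hA3 | hA3
        ·
          rw [show x1inv (t) = 2 * t + (-1) by simp only [x1inv]; rw [if_neg (by linarith), if_neg (by linarith), if_neg (by linarith)] <;> ring]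
          rw [show x0inv (2 * t + (-1)) = 4 * t + (-3) by simp only [x0inv]; rw [if_neg (by linarith), if_neg (by linarith)] <;> ring]
          rw [show x0inv (4 * t + (-3)) = 4 * t + (-13/4) by simp only [x0inv]; rw [if_neg (by linarith), if_pos (by linarith)] <;> ring]
          rw [show x1fun (4 * t + (-13/4)) = 4 * t + (-13/4) by simp only [x1fun]; rw [if_pos (by linarith)] <;> ring]
          rw [show x0fun (4 * t + (-13/4)) = 4 * t + (-3) by simp only [x0fun]; rw [if_neg (by linarith), if_pos (by linarith)] <;> ring]
          rw [show x0fun (4 * t + (-3)) = 2 * t + (-1) by simp only [x0fun]; rw [if_neg (by linarith), if_neg (by linarith)] <;> ring]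
          rw [show x1fun (2 * t + (-1)) = 1 * t + 0 by simp only [x1fun]; rw [if_neg (by linarith), if_neg (by linarith), if_neg (by linarith)] <;> ring]
          rw [show x0inv (t) = (-1) + 2 * t by simp only [x0inv]; rw [if_neg (by linarith), if_neg (by linarith)] <;> ring]
          rw [show x0inv ((-1) + 2 * t) = (-3) + 4 * t by simp only [x0inv]; rw [if_neg (by linarith), if_neg (by linarith)] <;> ring]
          rw [show x0inv ((-3) + 4 * t) = (-13/4) + 4 * t by simp only [x0inv]; rw [if_neg (by linarith), if_pos (by linarith)] <;> ring]
          rw [show x1fun ((-13/4) + 4 * t) = (-13/4) + 4 * t by simp only [x1fun]; rw [if_pos (by linarith)] <;> ring]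
          rw [show x0fun ((-13/4) + 4 * t) = (-3) + 4 * t by simp only [x0fun]; rw [if_neg (by linarith), if_pos (by linarith)] <;> ring]
          rw [show x0fun ((-3) + 4 * t) = (-1) + 2 * t by simp only [x0fun]; rw [if_neg (by linarith), if_neg (by linarith)] <;> ring]
          rw [show x0fun ((-1) + 2 * t) = 0 + 1 * t by simp only [x0fun]; rw [if_neg (by linarith), if_neg (by linarith)] <;> ring]
          linarith
        ·
          rcases le_or_gt t (61/64) with hA4 | hA4
          ·
            rw [show x1inv (t) = 2 * t + (-1) by simp only [x1inv]; rw [if_neg (by linarith), if_neg (by linarith), if_neg (by linarith)] <;> ring]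
            rw [show x0inv (2 * t + (-1)) = 4 * t + (-3) by simp only [x0inv]; rw [if_neg (by linarith), if_neg (by linarith)] <;> ring]
            rw [show x0inv (4 * t + (-3)) = 8 * t + (-7) by simp only [x0inv]; rw [if_neg (by linarith), if_neg (by linarith)] <;> ring]
            rw [show x1fun (8 * t + (-7)) = 16 * t + (-29/2) by simp only [x1fun]; rw [if_neg (by linarith), if_pos (by linarith)] <;> ring]
            rw [show x0fun (16 * t + (-29/2)) = 8 * t + (-27/4) by simp only [x0fun]; rw [if_neg (by linarith), if_neg (by linarith)] <;> ring]
            rw [show x0fun (8 * t + (-27/4)) = 4 * t + (-23/8) by simp only [x0fun]; rw [if_neg (by linarith), if_neg (by linarith)] <;> ring]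
            rw [show x1fun (4 * t + (-23/8)) = 2 * t + (-15/16) by simp only [x1fun]; rw [if_neg (by linarith), if_neg (by linarith), if_neg (by linarith)] <;> ring]
            rw [show x0inv (t) = (-1) + 2 * t by simp only [x0inv]; rw [if_neg (by linarith), if_neg (by linarith)] <;> ring]
            rw [show x0inv ((-1) + 2 * t) = (-3) + 4 * t by simp only [x0inv]; rw [if_neg (by linarith), if_neg (by linarith)] <;> ring]
            rw [show x0inv ((-3) + 4 * t) = (-7) + 8 * t by simp only [x0inv]; rw [if_neg (by linarith), if_neg (by linarith)] <;> ring]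
            rw [show x1fun ((-7) + 8 * t) = (-29/2) + 16 * t by simp only [x1fun]; rw [if_neg (by linarith), if_pos (by linarith)] <;> ring]
            rw [show x0fun ((-29/2) + 16 * t) = (-27/4) + 8 * t by simp only [x0fun]; rw [if_neg (by linarith), if_neg (by linarith)] <;> ring]
            rw [show x0fun ((-27/4) + 8 * t) = (-23/8) + 4 * t by simp only [x0fun]; rw [if_neg (by linarith), if_neg (by linarith)] <;> ring]
            rw [show x0fun ((-23/8) + 4 * t) = (-15/16) + 2 * t by simp only [x0fun]; rw [if_neg (by linarith), if_neg (by linarith)] <;> ring]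
            linarith
          ·
            rcases le_or_gt t (31/32) with hA5 | hA5
            ·
              rw [show x1inv (t) = 2 * t + (-1) by simp only [x1inv]; rw [if_neg (by linarith), if_neg (by linarith), if_neg (by linarith)] <;> ring]
              rw [show x0inv (2 * t + (-1)) = 4 * t + (-3) by simp only [x0inv]; rw [if_neg (by linarith), if_neg (by linarith)] <;> ring]
              rw [show x0inv (4 * t + (-3)) = 8 * t + (-7) by simp only [x0inv]; rw [if_neg (by linarith), if_neg (by linarith)] <;> ring]
              rw [show x1fun (8 * t + (-7)) = 8 * t + (-55/8) by simp only [x1fun]; rw [if_neg (by linarith), if_neg (by linarith), if_pos (by linarith)] <;> ring]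
              rw [show x0fun (8 * t + (-55/8)) = 4 * t + (-47/16) by simp only [x0fun]; rw [if_neg (by linarith), if_neg (by linarith)] <;> ring]
              rw [show x0fun (4 * t + (-47/16)) = 2 * t + (-31/32) by simp only [x0fun]; rw [if_neg (by linarith), if_neg (by linarith)] <;> ring]
              rw [show x1fun (2 * t + (-31/32)) = 1 * t + (1/64) by simp only [x1fun]; rw [if_neg (by linarith), if_neg (by linarith), if_neg (by linarith)] <;> ring]
              rw [show x0inv (t) = (-1) + 2 * t by simp only [x0inv]; rw [if_neg (by linarith), if_neg (by linarith)] <;> ring]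
              rw [show x0inv ((-1) + 2 * t) = (-3) + 4 * t by simp only [x0inv]; rw [if_neg (by linarith), if_neg (by linarith)] <;> ring]
              rw [show x0inv ((-3) + 4 * t) = (-7) + 8 * t by simp only [x0inv]; rw [if_neg (by linarith), if_neg (by linarith)] <;> ring]
              rw [show x1fun ((-7) + 8 * t) = (-55/8) + 8 * t by simp only [x1fun]; rw [if_neg (by linarith), if_neg (by linarith), if_pos (by linarith)] <;> ring]
              rw [show x0fun ((-55/8) + 8 * t) = (-47/16) + 4 * t by simp only [x0fun]; rw [if_neg (by linarith), if_neg (by linarith)] <;> ring]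
              rw [show x0fun ((-47/16) + 4 * t) = (-31/32) + 2 * t by simp only [x0fun]; rw [if_neg (by linarith), if_neg (by linarith)] <;> ring]
              rw [show x0fun ((-31/32) + 2 * t) = (1/64) + 1 * t by simp only [x0fun]; rw [if_neg (by linarith), if_neg (by linarith)] <;> ring]
              linarith
            ·
              rw [show x1inv (t) = 2 * t + (-1) by simp only [x1inv]; rw [if_neg (by linarith), if_neg (by linarith), if_neg (by linarith)] <;> ring]
              rw [show x0inv (2 * t + (-1)) = 4 * t + (-3) by simp only [x0inv]; rw [if_neg (by linarith), if_neg (by linarith)] <;> ring]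
              rw [show x0inv (4 * t + (-3)) = 8 * t + (-7) by simp only [x0inv]; rw [if_neg (by linarith), if_neg (by linarith)] <;> ring]
              rw [show x1fun (8 * t + (-7)) = 4 * t + (-3) by simp only [x1fun]; rw [if_neg (by linarith), if_neg (by linarith), if_neg (by linarith)] <;> ring]
              rw [show x0fun (4 * t + (-3)) = 2 * t + (-1) by simp only [x0fun]; rw [if_neg (by linarith), if_neg (by linarith)] <;> ring]
              rw [show x0fun (2 * t + (-1)) = 1 * t + 0 by simp only [x0fun]; rw [if_neg (by linarith), if_neg (by linarith)] <;> ring]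
              rw [show x1fun (1 * t + 0) = (1/2) * t + (1/2) by simp only [x1fun]; rw [if_neg (by linarith), if_neg (by linarith), if_neg (by linarith)] <;> ring]
              rw [show x0inv (t) = (-1) + 2 * t by simp only [x0inv]; rw [if_neg (by linarith), if_neg (by linarith)] <;> ring]
              rw [show x0inv ((-1) + 2 * t) = (-3) + 4 * t by simp only [x0inv]; rw [if_neg (by linarith), if_neg (by linarith)] <;> ring]
              rw [show x0inv ((-3) + 4 * t) = (-7) + 8 * t by simp only [x0inv]; rw [if_neg (by linarith), if_neg (by linarith)] <;> ring]
              rw [show x1fun ((-7) + 8 * t) = (-3) + 4 * t by simp only [x1fun]; rw [if_neg (by linarith), if_neg (by linarith), if_neg (by linarith)] <;> ring]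
              rw [show x0fun ((-3) + 4 * t) = (-1) + 2 * t by simp only [x0fun]; rw [if_neg (by linarith), if_neg (by linarith)] <;> ring]
              rw [show x0fun ((-1) + 2 * t) = 0 + 1 * t by simp only [x0fun]; rw [if_neg (by linarith), if_neg (by linarith)] <;> ring]
              rw [show x0fun (0 + 1 * t) = (1/2) + (1/2) * t by simp only [x0fun]; rw [if_neg (by linarith), if_neg (by linarith)] <;> ring]
              linarith

/-! #### The two basic Thompson relations, at the level of permutations -/

lemma xone : x 1 = x₁ := by simp [x]

lemma E2 : x 1 * x 2 * (x 1)⁻¹ = x 3 := by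
  have h1 : x 1 = x₁ := by simp [x]
  have h2 : x 2 = x₀ * (x₁ * x₀⁻¹) := by simp [x]; group
  have h3 : x 3 = x₀ * (x₀ * (x₁ * (x₀⁻¹ * x₀⁻¹))) := by
    simp [x]; rw [sq, mul_inv_rev]; group
  rw [h1, h2, h3]
  apply Equiv.ext; intro t
  have ht := t.2
  rw [Set.mem_Icc] at ht
  apply Subtype.ext
  simp only [Equiv.Perm.mul_apply, x₀_apply, x₁_apply, x₀_inv_apply, x₁_inv_apply]
  exact E2_real t ht.1 ht.2

lemma E3 : x 1 * x 3 * (x 1)⁻¹ = x 4 := by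
  have h1 : x 1 = x₁ := by simp [x]
  have h3 : x 3 = x₀ * (x₀ * (x₁ * (x₀⁻¹ * x₀⁻¹))) := by
    simp [x]; rw [sq, mul_inv_rev]; group
  have h4 : x 4 = x₀ * (x₀ * (x₀ * (x₁ * (x₀⁻¹ * (x₀⁻¹ * x₀⁻¹))))) := by
    simp [x]; rw [pow_succ, sq, mul_inv_rev, mul_inv_rev]; group
  rw [h1, h3, h4]
  apply Equiv.ext; intro t
  have ht := t.2
  rw [Set.mem_Icc] at ht
  apply Subtype.ext
  simp only [Equiv.Perm.mul_apply, x₀_apply, x₁_apply, x₀_inv_apply, x₁_inv_apply]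
  exact E3_real t ht.1 ht.2

end Aux

section Rel

/-- `x (j+1)` is the conjugate of `x j` by `x₀` (for `j ≥ 1`). -/
lemma x_succ_eq (j : ℕ) (hj : 1 ≤ j) : x (j+1) = x 0 * x j * (x 0)⁻¹ := by
  obtain ⟨m, rfl⟩ : ∃ m, j = m + 1 := ⟨j - 1, by omega⟩
  have h0 : x 0 = x₀ := by simp [x]
  have h1 : x (m+1) = x₀ ^ m * x₁ * (x₀ ^ m)⁻¹ := by simp [x]
  have h2 : x (m+1+1) = x₀ ^ (m+1) * x₁ * (x₀ ^ (m+1))⁻¹ := by simp [x]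
  rw [h0, h1, h2, pow_succ']
  group

lemma conj0 (j : ℕ) (hj : 1 ≤ j) : x 0 * x j * (x 0)⁻¹ = x (j+1) := (x_succ_eq j hj).symm

lemma shift {i j : ℕ} (hi : 1 ≤ i) (hj : 1 ≤ j) (h : x i * x j * (x i)⁻¹ = x (j+1)) :
    x (i+1) * x (j+1) * (x (i+1))⁻¹ = x (j+1+1) := by
  rw [x_succ_eq i hi]
  conv_rhs => rw [x_succ_eq (j+1) (by omega), ← h]
  rw [x_succ_eq j hj]
  group

/-- Conjugation of `x j` by `x 1`, for `j ≥ 2`. -/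
lemma E : ∀ j : ℕ, 2 ≤ j → x 1 * x j * (x 1)⁻¹ = x (j+1) := by
  intro j
  induction j using Nat.strong_induction_on with
  | _ j IH =>
    intro hj
    by_cases hj2 : j = 2
    · subst hj2; exact E2
    by_cases hj3 : j = 3
    · subst hj3; exact E3
    obtain ⟨m, rfl⟩ : ∃ m, j = m + 4 := ⟨j - 4, by omega⟩
    have ha : x 1 * x (m+2) * (x 1)⁻¹ = x (m+3) := IH (m+2) (by omega) (by omega)
    have hb : x 1 * x (m+3) * (x 1)⁻¹ = x (m+4) := IH (m+3) (by omega) (by omega)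
    have h2' : x 2 * x (m+3) * (x 2)⁻¹ = x (m+4) := shift (by omega) (by omega) ha
    have h3' : x 3 * x (m+4) * (x 3)⁻¹ = x (m+5) := shift (by omega) (by omega) h2'
    have h12 : x 1 * x 2 * (x 1)⁻¹ = x 3 := E2
    show x 1 * x (m+4) * (x 1)⁻¹ = x (m+5)
    calc x 1 * x (m+4) * (x 1)⁻¹
        = x 1 * (x 2 * x (m+3) * (x 2)⁻¹) * (x 1)⁻¹ := by rw [h2']
      _ = (x 1 * x 2 * (x 1)⁻¹) * (x 1 * x (m+3) * (x 1)⁻¹) * (x 1 * x 2 * (x 1)⁻¹)⁻¹ := by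
          group
      _ = x 3 * x (m+4) * (x 3)⁻¹ := by rw [h12, hb]
      _ = x (m+5) := h3'

/-- Conjugation of `x j` by `x i`, for `1 ≤ i < j`. -/
lemma Econj : ∀ i j : ℕ, 1 ≤ i → i < j → x i * x j * (x i)⁻¹ = x (j+1) := by
  intro i
  induction i with
  | zero => intro j h; omega
  | succ s IH =>
    intro j h1 hij
    rcases Nat.eq_zero_or_pos s with rfl | hs
    · exact E j (by omega)
    · obtain ⟨j', rfl⟩ : ∃ j', j = j' + 1 := ⟨j - 1, by omega⟩
      exact shift hs (by omega) (IH j' hs (by omega))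

/-- The defining relations of `F` (in Lean's right-to-left composition order):
`x i * x j = x (j+1) * x i` for `i < j`. -/
lemma relx (i j : ℕ) (hij : i < j) : x i * x j = x (j+1) * x i := by
  rcases Nat.eq_zero_or_pos i with rfl | hi
  · have h := conj0 j (by omega)
    rw [← h]; group
  · have h := Econj i j hi hij
    rw [← h]; group

lemma swap_lt {k c : ℕ} (h : k < c) : x k * (x c)⁻¹ = (x (c+1))⁻¹ * x k := by
  have h' := relx k c h
  have : (x (c+1)) * (x k * (x c)⁻¹) = (x (c+1)) * ((x (c+1))⁻¹ * x k) := by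
    rw [← mul_assoc, ← h']; group
  exact mul_left_cancel this

lemma swap_gt {k c : ℕ} (h : c < k) : x k * (x c)⁻¹ = (x c)⁻¹ * x (k+1) := by
  have h' := relx c k h
  have : (x c) * (x k * (x c)⁻¹) = (x c) * ((x c)⁻¹ * x (k+1)) := by
    rw [← mul_assoc, h']; group
  exact mul_left_cancel this

/-- All the "paper" pair generators `x_c x_{c+1}` belong to Jones' subgroup. -/
lemma pair_mem : ∀ c : ℕ, x (c+1) * x c ∈ JonesF := by
  intro c
  induction c using Nat.strong_induction_on with
  | _ c IH =>
    have hJ0 : x 1 * x 0 ∈ JonesF := Subgroup.subset_closure (by simp)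
    match c with
    | 0 => exact hJ0
    | 1 => exact Subgroup.subset_closure (by simp)
    | 2 => exact Subgroup.subset_closure (by simp)
    | (d+3) =>
      have A : x 0 * x (d+2) * (x 0)⁻¹ = x (d+3) := conj0 (d+2) (by omega)
      have B : x 0 * x (d+1) * (x 0)⁻¹ = x (d+2) := conj0 (d+1) (by omega)
      have C : x 1 * x (d+3) * (x 1)⁻¹ = x (d+4) := Econj 1 (d+3) le_rfl (by omega)
      have D : x 1 * x (d+2) * (x 1)⁻¹ = x (d+3) := Econj 1 (d+2) le_rfl (by omega)
      have key : (x 1 * x 0) * (x (d+2) * x (d+1)) * (x 1 * x 0)⁻¹ = x (d+4) * x (d+3) := by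
        calc (x 1 * x 0) * (x (d+2) * x (d+1)) * (x 1 * x 0)⁻¹
            = x 1 * ((x 0 * x (d+2) * (x 0)⁻¹) * (x 0 * x (d+1) * (x 0)⁻¹)) * (x 1)⁻¹ := by
              group
          _ = x 1 * (x (d+3) * x (d+2)) * (x 1)⁻¹ := by rw [A, B]
          _ = (x 1 * x (d+3) * (x 1)⁻¹) * (x 1 * x (d+2) * (x 1)⁻¹) := by group
          _ = x (d+4) * x (d+3) := by rw [C, D]
      show x (d+4) * x (d+3) ∈ JonesF
      rw [← key]
      exact mul_mem (mul_mem hJ0 (IH (d+1) (by omega))) (inv_mem hJ0)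

end Rel

section Push

/-- Basic product lemmas for `pp`. -/
lemma pp_nil : pp ([] : List ℕ) = 1 := rfl

lemma pp_cons (k : ℕ) (T : List ℕ) : pp (k :: T) = pp T * x k := by
  simp [pp]

/-- Pushing the inverse letter `x_c^{-1}` (paper notation) from the left through a positive
word `T`.  Returns the resulting positive word together with `some c'` if the inverse letter
survives (with new index `c'`), or `none` if it cancelled. -/
def push : ℕ → List ℕ → List ℕ × Option ℕ
  | c, [] => ([], some c)
  | c, k :: T =>
    if k = c then (T, none)
    else if k < c then (k :: (push (c+1) T).1, (push (c+1) T).2)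
    else ((k+1) :: (push c T).1, (push c T).2)

lemma push_len_none : ∀ (T : List ℕ) (c : ℕ) (T' : List ℕ),
    push c T = (T', none) → T'.length + 1 = T.length := by
  intro T
  induction T with
  | nil => intro c T' h; simp [push] at h
  | cons k T IH =>
    intro c T' h
    by_cases h1 : k = c
    · simp only [push, if_pos h1, Prod.mk.injEq] at h
      rw [← h.1]; simp
    · by_cases h2 : k < c
      · simp only [push, if_neg h1, if_pos h2, Prod.mk.injEq] at h
        obtain ⟨h3, h4⟩ := h
        have hrec : push (c+1) T = ((push (c+1) T).1, none) := by
          rw [← h4]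
        have := IH (c+1) _ hrec
        rw [← h3]; simp; omega
      · simp only [push, if_neg h1, if_neg h2, Prod.mk.injEq] at h
        obtain ⟨h3, h4⟩ := h
        have hrec : push c T = ((push c T).1, none) := by rw [← h4]
        have := IH c _ hrec
        rw [← h3]; simp; omega

lemma push_len_some : ∀ (T : List ℕ) (c : ℕ) (T' : List ℕ) (c' : ℕ),
    push c T = (T', some c') → T'.length = T.length := by
  intro T
  induction T with
  | nil => intro c T' c' h; simp only [push, Prod.mk.injEq] at h; rw [← h.1]
  | cons k T IH =>
    intro c T' c' h
    by_cases h1 : k = c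
    · simp only [push, if_pos h1, Prod.mk.injEq] at h
      exact absurd h.2 (by simp)
    · by_cases h2 : k < c
      · simp only [push, if_neg h1, if_pos h2, Prod.mk.injEq] at h
        obtain ⟨h3, h4⟩ := h
        have hrec : push (c+1) T = ((push (c+1) T).1, some c') := by rw [← h4]
        have := IH (c+1) _ _ hrec
        rw [← h3]; simp; omega
      · simp only [push, if_neg h1, if_neg h2, Prod.mk.injEq] at h
        obtain ⟨h3, h4⟩ := h
        have hrec : push c T = ((push c T).1, some c') := by rw [← h4]
        have := IH c _ _ hrec
        rw [← h3]; simp; omega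

lemma push_spec_none : ∀ (T : List ℕ) (c : ℕ) (T' : List ℕ),
    push c T = (T', none) → pp T * (x c)⁻¹ = pp T' := by
  intro T
  induction T with
  | nil => intro c T' h; simp [push] at h
  | cons k T IH =>
    intro c T' h
    by_cases h1 : k = c
    · simp only [push, if_pos h1, Prod.mk.injEq] at h
      rw [← h.1, pp_cons, h1]; group
    · by_cases h2 : k < c
      · simp only [push, if_neg h1, if_pos h2, Prod.mk.injEq] at h
        obtain ⟨h3, h4⟩ := h
        have hrec : push (c+1) T = ((push (c+1) T).1, none) := by rw [← h4]
        have hIH := IH (c+1) _ hrec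
        rw [← h3, pp_cons, pp_cons, mul_assoc, swap_lt h2, ← mul_assoc, hIH]
      · have h2' : c < k := by omega
        simp only [push, if_neg h1, if_neg h2, Prod.mk.injEq] at h
        obtain ⟨h3, h4⟩ := h
        have hrec : push c T = ((push c T).1, none) := by rw [← h4]
        have hIH := IH c _ hrec
        rw [← h3, pp_cons, pp_cons, mul_assoc, swap_gt h2', ← mul_assoc, hIH]

lemma push_spec_some : ∀ (T : List ℕ) (c : ℕ) (T' : List ℕ) (c' : ℕ),
    push c T = (T', some c') → pp T * (x c)⁻¹ = (x c')⁻¹ * pp T' := by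
  intro T
  induction T with
  | nil =>
    intro c T' c' h
    simp only [push, Prod.mk.injEq, Option.some.injEq] at h
    rw [← h.1, ← h.2, pp_nil]; group
  | cons k T IH =>
    intro c T' c' h
    by_cases h1 : k = c
    · simp only [push, if_pos h1, Prod.mk.injEq] at h
      exact absurd h.2 (by simp)
    · by_cases h2 : k < c
      · simp only [push, if_neg h1, if_pos h2, Prod.mk.injEq] at h
        obtain ⟨h3, h4⟩ := h
        have hrec : push (c+1) T = ((push (c+1) T).1, some c') := by rw [← h4]
        have hIH := IH (c+1) _ _ hrec
        rw [← h3, pp_cons, pp_cons, mul_assoc, swap_lt h2, ← mul_assoc, hIH, mul_assoc]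
      · have h2' : c < k := by omega
        simp only [push, if_neg h1, if_neg h2, Prod.mk.injEq] at h
        obtain ⟨h3, h4⟩ := h
        have hrec : push c T = ((push c T).1, some c') := by rw [← h4]
        have hIH := IH c _ _ hrec
        rw [← h3, pp_cons, pp_cons, mul_assoc, swap_gt h2', ← mul_assoc, hIH, mul_assoc]

lemma push_gt : ∀ (T : List ℕ) (c : ℕ), (∀ m ∈ T, c < m) →
    push c T = (T.map (· + 1), some c) := by
  intro T
  induction T with
  | nil => intro c _; simp [push]
  | cons k T IH =>
    intro c hgt
    have hk : c < k := hgt k (List.mem_cons_self)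
    have h1 : ¬ (k = c) := by omega
    have h2 : ¬ (k < c) := by omega
    have hrec := IH c (fun m hm => hgt m (List.mem_cons_of_mem _ hm))
    simp only [push, if_neg h1, if_neg h2, hrec, List.map_cons]

/-- Structure of a non-cancelling push through a sorted word. -/
lemma push_char : ∀ (T : List ℕ) (c : ℕ) (T' : List ℕ) (c' : ℕ),
    T.Pairwise (· ≤ ·) → push c T = (T', some c') →
    ∃ T₁ T₂ : List ℕ, T = T₁ ++ T₂ ∧ T' = T₁ ++ T₂.map (· + 1) ∧ c' = c + T₁.length ∧
      (∀ i, i < T₁.length → T₁.getD i 0 < c + i) ∧ (∀ m ∈ T₂, c + T₁.length < m) := by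
  intro T
  induction T with
  | nil =>
    intro c T' c' _ h
    simp only [push, Prod.mk.injEq, Option.some.injEq] at h
    exact ⟨[], [], by simp, by simp [← h.1], by simp [h.2], by simp, by simp⟩
  | cons k T IH =>
    intro c T' c' hs h
    by_cases h1 : k = c
    · simp only [push, if_pos h1, Prod.mk.injEq] at h
      exact absurd h.2 (by simp)
    · by_cases h2 : k < c
      · simp only [push, if_neg h1, if_pos h2, Prod.mk.injEq] at h
        obtain ⟨h3, h4⟩ := h
        have hrec : push (c+1) T = ((push (c+1) T).1, some c') := by rw [← h4]
        obtain ⟨T₁, T₂, e1, e2, e3, e4, e5⟩ :=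
          IH (c+1) _ _ ((List.pairwise_cons.mp hs).2) hrec
        refine ⟨k :: T₁, T₂, by simp [e1], by rw [← h3, e2]; simp, by simp [e3]; omega,
          ?_, ?_⟩
        · intro i hi
          cases i with
          | zero => simpa using h2
          | succ i =>
            simp only [List.getD_cons_succ]
            have := e4 i (by simpa using hi)
            omega
        · intro m hm
          have := e5 m hm
          simp only [List.length_cons]
          omega
      · have h2' : c < k := by omega
        have hgt : ∀ m ∈ T, c < m :=
          fun m hm => lt_of_lt_of_le h2' ((List.pairwise_cons.mp hs).1 m hm)
        have hp := push_gt T c hgt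
        simp only [push, if_neg h1, if_neg h2, hp, Prod.mk.injEq] at h
        obtain ⟨h3, h4⟩ := h
        refine ⟨[], k :: T, by simp, by rw [← h3]; simp, ?_, by simp, ?_⟩
        · obtain rfl : c = c' := by injection h4
          simp
        intro m hm
        simp only [List.length_append, List.length_nil, Nat.add_zero]
        rcases List.mem_cons.mp hm with rfl | hm
        · simpa using h2'
        · simpa using hgt m hm

end Push

section ListHelpers

lemma headI_mem' {l : List ℕ} (h : l ≠ []) : l.headI ∈ l := by
  cases l with
  | nil => exact absurd rfl h
  | cons a l => exact List.mem_cons_self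

lemma getLastD_irrel {l : List ℕ} (h : l ≠ []) (d d' : ℕ) : l.getLastD d = l.getLastD d' := by
  cases l with
  | nil => exact absurd rfl h
  | cons a l => rw [List.getLastD_cons, List.getLastD_cons]

lemma headI_eq_getD {l : List ℕ} (h : l ≠ []) : l.headI = l.getD 0 0 := by
  cases l with
  | nil => exact absurd rfl h
  | cons a l => rfl

lemma getD_map_succ : ∀ (l : List ℕ) (k : ℕ), k < l.length →
    (l.map (· + 1)).getD k 0 = l.getD k 0 + 1 := by
  intro l
  induction l with
  | nil => intro k h; simp at h
  | cons a l IH =>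
    intro k h
    cases k with
    | zero => simp
    | succ k =>
      simp only [List.map_cons, List.getD_cons_succ]
      exact IH k (by simpa using h)

lemma headI_map_succ {l : List ℕ} (h : l ≠ []) : (l.map (· + 1)).headI = l.headI + 1 := by
  cases l with
  | nil => exact absurd rfl h
  | cons a l => rfl

lemma getLastD_map_succ' : ∀ (l : List ℕ) (d : ℕ),
    (l.map (· + 1)).getLastD (d + 1) = l.getLastD d + 1 := by
  intro l
  induction l with
  | nil => intro d; rfl
  | cons a l IH =>
    intro d
    simp only [List.map_cons, List.getLastD_cons]
    exact IH a

lemma getLastD_map_succ {l : List ℕ} (h : l ≠ []) :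
    (l.map (· + 1)).getLastD 0 = l.getLastD 0 + 1 := by
  have hm : l.map (· + 1) ≠ [] := by simpa using h
  rw [getLastD_irrel hm 0 1]
  exact getLastD_map_succ' l 0

lemma sorted_map_succ {l : List ℕ} (h : l.Pairwise (· ≤ ·)) :
    (l.map (· + 1)).Pairwise (· ≤ ·) :=
  List.Pairwise.map _ (fun hab => by omega) h

lemma isBlock_map_succ {B : List ℕ} (h : IsBlock B) : IsBlock (B.map (· + 1)) := by
  obtain ⟨h1, h2, h3, h4⟩ := h
  refine ⟨by simpa using h1, sorted_map_succ h2, ?_, ?_⟩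
  · rw [headI_map_succ h1, getLastD_map_succ h1]
    omega
  · intro k hk
    have hk' : k < B.length := by simpa using hk
    rw [getD_map_succ B k hk', headI_map_succ h1]
    have := h4 k hk'
    omega

lemma isBlock_of_tail {k₁ : ℕ} {B' : List ℕ} (hne : B' ≠ []) (hsorted : B'.Pairwise (· ≤ ·))
    (hk : ∀ b ∈ B', k₁ ≤ b) (hlast : k₁ ≠ B'.getLastD 0)
    (hcond : ∀ k, k < B'.length → B'.getD k 0 < k₁ + 1 + k) : IsBlock B' := by
  have hlen : 0 < B'.length := List.length_pos_iff.mpr hne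
  have h0 : B'.headI = k₁ := by
    have hh : B'.headI = B'.getD 0 0 := headI_eq_getD hne
    have hlt := hcond 0 hlen
    have hge : k₁ ≤ B'.headI := hk _ (headI_mem' hne)
    omega
  refine ⟨hne, hsorted, by rw [h0]; exact hlast, ?_⟩
  intro k hk'
  rw [h0]
  have := hcond k hk'
  omega

end ListHelpers

section KeyLemma

/-- Key lemma: a sorted positive word containing a block can be shortened (by at least two
letters) through right multiplication by an element of Jones' subgroup. -/
lemma key_lemma : ∀ (N : ℕ) (W : List ℕ), W.length ≤ N → W.Pairwise (· ≤ ·) →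
    ∀ P B S : List ℕ, W = P ++ B ++ S → IsBlock B →
    ∃ G ∈ JonesF, ∃ M : List (Equiv.Perm I),
      (∀ a ∈ M, ∃ i : ℕ, a = x i ∨ a = (x i)⁻¹) ∧ M.length + 2 ≤ W.length ∧
      pp W * G = M.prod := by
  intro N
  induction N with
  | zero =>
    intro W hWlen _ P B S hsplit hB
    exfalso
    have hW : W = [] := List.eq_nil_of_length_eq_zero (by omega)
    rw [hW] at hsplit
    have h1 : P ++ B = [] ∧ S = [] := List.append_eq_nil_iff.mp hsplit.symm
    have h2 : B = [] := (List.append_eq_nil_iff.mp h1.1).2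
    exact hB.1 h2
  | succ N IH =>
    intro W hWlen hsort P B S hsplit hB
    have hBne : B ≠ [] := hB.1
    cases W with
    | nil =>
      exfalso
      have h1 : P ++ B = [] ∧ S = [] := List.append_eq_nil_iff.mp hsplit.symm
      exact hBne (List.append_eq_nil_iff.mp h1.1).2
    | cons k₁ T =>
    have hTsort : T.Pairwise (· ≤ ·) := (List.pairwise_cons.mp hsort).2
    have hk₁ : ∀ b ∈ T, k₁ ≤ b := (List.pairwise_cons.mp hsort).1
    have hpairJ : x (k₁+1) * x k₁ ∈ JonesF := pair_mem k₁
    have hstep : pp (k₁ :: T) * (x (k₁+1) * x k₁)⁻¹ = pp T * (x (k₁+1))⁻¹ := by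
      rw [pp_cons, mul_inv_rev]
      group
    rcases hp : push (k₁+1) T with ⟨T', r⟩
    cases r with
    | none =>
      refine ⟨(x (k₁+1) * x k₁)⁻¹, inv_mem hpairJ, (T'.map x).reverse, ?_, ?_, ?_⟩
      · intro a ha
        simp only [List.mem_reverse, List.mem_map] at ha
        obtain ⟨i, _, rfl⟩ := ha
        exact ⟨i, Or.inl rfl⟩
      · have := push_len_none T (k₁+1) T' hp
        simp only [List.length_reverse, List.length_map, List.length_cons]
        omega
      · rw [hstep, push_spec_none T (k₁+1) T' hp]
        rfl
    | some C =>
      obtain ⟨T₁, T₂, e1, e2, e3, e4, e5⟩ := push_char T (k₁+1) T' C hTsort hp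
      have hT'len : T'.length = T.length := push_len_some T (k₁+1) T' C hp
      have hT'sort : T'.Pairwise (· ≤ ·) := by
        rw [e2]
        rw [e1] at hTsort
        have h := List.pairwise_append.mp hTsort
        refine List.pairwise_append.mpr ⟨h.1, sorted_map_succ h.2.1, ?_⟩
        intro a ha b hb
        simp only [List.mem_map] at hb
        obtain ⟨b', hb', rfl⟩ := hb
        have := h.2.2 a ha b' hb'
        omega
      have hdec : ∃ P' B' S' : List ℕ, T' = P' ++ B' ++ S' ∧ IsBlock B' := by
        cases P with
        | nil =>
          cases B with
          | nil => exact absurd rfl hBne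
          | cons b₀ B' =>
            simp only [List.nil_append, List.cons_append] at hsplit
            injection hsplit with hb hT
            obtain rfl : k₁ = b₀ := hb
            have hB'ne : B' ≠ [] := by
              intro h
              apply hB.2.2.1
              rw [h]
              rfl
            have hB'sorted : B'.Pairwise (· ≤ ·) := by
              rw [hT] at hTsort
              exact (List.pairwise_append.mp hTsort).1
            have hB'ge : ∀ b ∈ B', k₁ ≤ b := fun b hb' =>
              hk₁ b (by rw [hT]; exact List.mem_append_left _ hb')
            have hlast : k₁ ≠ B'.getLastD 0 := by
              have h31 := hB.2.2.1
              rw [show (k₁ :: B').headI = k₁ from rfl, List.getLastD_cons,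
                getLastD_irrel hB'ne k₁ 0] at h31
              exact h31
            have hTe : B' ++ S = T₁ ++ T₂ := by rw [← hT, e1]
            rcases List.append_eq_append_iff.mp hTe with ⟨a', ha1, ha2⟩ | ⟨c', hc1, hc2⟩
            · -- T₁ = B' ++ a'
              refine ⟨[], B', a' ++ T₂.map (· + 1), by rw [e2, ha1]; simp, ?_⟩
              refine isBlock_of_tail hB'ne hB'sorted hB'ge hlast ?_
              intro k hk
              have hkT₁ : k < T₁.length := by rw [ha1]; simp; omega
              have := e4 k hkT₁
              rwa [ha1, List.getD_append _ _ _ _ hk] at this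
            · cases c' with
              | nil =>
                have hT₁ : T₁ = B' := by rw [hc1]; simp
                refine ⟨[], B', T₂.map (· + 1), by rw [e2, hT₁]; simp, ?_⟩
                refine isBlock_of_tail hB'ne hB'sorted hB'ge hlast ?_
                intro k hk
                have hkT₁ : k < T₁.length := by rw [hT₁]; omega
                have := e4 k hkT₁
                rwa [hT₁] at this
              | cons c₀ c'' =>
                exfalso
                have h1 : k₁ + 1 + T₁.length < c₀ :=
                  e5 c₀ (by rw [hc2]; exact List.mem_cons_self)
                have h2 : B'.getD T₁.length 0 = c₀ := by
                  rw [hc1, List.getD_append_right _ _ _ _ le_rfl]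
                  simp
                have hlen : B'.length = T₁.length + (c''.length + 1) := by
                  rw [hc1]; simp
                have h3 := hB.2.2.2 (T₁.length + 1)
                  (by simp only [List.length_cons]; omega)
                rw [show (k₁ :: B').headI = k₁ from rfl, List.getD_cons_succ, h2] at h3
                omega
        | cons p₀ P' =>
          simp only [List.cons_append] at hsplit
          injection hsplit with hb hT
          obtain rfl : k₁ = p₀ := hb
          have hT' : T = P' ++ (B ++ S) := by rw [hT, List.append_assoc]
          have hTe : P' ++ (B ++ S) = T₁ ++ T₂ := by rw [← hT', e1]
          rcases List.append_eq_append_iff.mp hTe with ⟨a', ha1, ha2⟩ | ⟨c', hc1, hc2⟩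
          · -- T₁ = P' ++ a', B ++ S = a' ++ T₂
            rcases List.append_eq_append_iff.mp ha2 with ⟨a₂, hb1, hb2⟩ | ⟨e', he1, he2⟩
            · -- a' = B ++ a₂, S = a₂ ++ T₂ : block untouched
              refine ⟨P', B, a₂ ++ T₂.map (· + 1), ?_, hB⟩
              rw [e2, ha1, hb1]
              simp [List.append_assoc]
            · -- B = a' ++ e', T₂ = e' ++ S
              cases a' with
              | nil =>
                -- B ++ S = T₂, T₁ = P'
                have hT₁ : T₁ = P' := by rw [ha1]; simp
                have he'B : e' = B := by rw [he1]; rfl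
                refine ⟨P', B.map (· + 1), S.map (· + 1), ?_, isBlock_map_succ hB⟩
                rw [e2, hT₁, he2, he'B]
                simp
              | cons a₀ a'' =>
                cases e' with
                | nil =>
                  -- B = a', T₂ = S
                  have hBa : B = a₀ :: a'' := by rw [he1]; simp
                  refine ⟨P', B, S.map (· + 1), ?_, hB⟩
                  rw [e2, ha1, hBa, he2]
                  simp [List.append_assoc]
                | cons e₀ e'' =>
                  exfalso
                  have h1 : k₁ + 1 + T₁.length < e₀ :=
                    e5 e₀ (by rw [he2]; exact List.mem_cons_self)
                  have h2 : B.getD (a₀ :: a'').length 0 = e₀ := by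
                    rw [he1, List.getD_append_right _ _ _ _ le_rfl]
                    simp
                  have h3 : B.headI = a₀ := by rw [he1]; rfl
                  have h4 : a₀ < k₁ + 1 + P'.length := by
                    have hi : P'.length < T₁.length := by rw [ha1]; simp
                    have h5 := e4 P'.length hi
                    rw [ha1, List.getD_append_right _ _ _ _ le_rfl] at h5
                    simpa using h5
                  have h6 : T₁.length = P'.length + (a''.length + 1) := by
                    rw [ha1]; simp
                  have h7 := hB.2.2.2 (a₀ :: a'').length
                    (by rw [he1]; simp)
                  rw [h2, h3] at h7
                  simp only [List.length_cons] at h1 h2 h6 h7 ⊢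
                  omega
          · -- P' = T₁ ++ c', T₂ = c' ++ (B ++ S) : block fully shifted
            refine ⟨T₁ ++ c'.map (· + 1), B.map (· + 1), S.map (· + 1), ?_,
              isBlock_map_succ hB⟩
            rw [e2, hc2]
            simp [List.append_assoc]
      obtain ⟨P', B', S', hsplit', hB'⟩ := hdec
      obtain ⟨G₂, hG₂, M', hM', hM'len, heq'⟩ := IH T'
        (by simp only [List.length_cons] at hWlen; omega)
        hT'sort P' B' S' hsplit' hB'
      refine ⟨(x (k₁+1) * x k₁)⁻¹ * G₂, mul_mem (inv_mem hpairJ) hG₂,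
        (x C)⁻¹ :: M', ?_, ?_, ?_⟩
      · intro a ha
        rcases List.mem_cons.mp ha with rfl | ha
        · exact ⟨C, Or.inr rfl⟩
        · exact hM' a ha
      · simp only [List.length_cons]
        omega
      · calc pp (k₁ :: T) * ((x (k₁+1) * x k₁)⁻¹ * G₂)
            = (pp (k₁ :: T) * (x (k₁+1) * x k₁)⁻¹) * G₂ := by rw [mul_assoc]
          _ = (pp T * (x (k₁+1))⁻¹) * G₂ := by rw [hstep]
          _ = ((x C)⁻¹ * pp T') * G₂ := by rw [push_spec_some T (k₁+1) T' C hp]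
          _ = (x C)⁻¹ * (pp T' * G₂) := by rw [mul_assoc]
          _ = (x C)⁻¹ * M'.prod := by rw [heq']
          _ = ((x C)⁻¹ :: M').prod := by rw [List.prod_cons]

end KeyLemma

lemma len_le_of_word (M : List (Equiv.Perm I))
    (hM : ∀ a ∈ M, ∃ i : ℕ, a = x i ∨ a = (x i)⁻¹) : len M.prod ≤ M.length :=
  Nat.sInf_le ⟨M, rfl, hM, rfl⟩
/-- Let `C = F⃗ a F⃗` be a double coset of Jones' subgroup in `F`, and let
`w = x_{i_1}⋯x_{i_n}` (with `i_1 ≤ ⋯ ≤ i_n`, encoded by the list `l`, and `n = |w|`) be a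
positive element of `C` of minimal length among elements of `C`.  Then no contiguous subword
of `w` is a block. -/
theorem stmt9 (a : Equiv.Perm I) (ha : a ∈ F) (l : List ℕ) (hsort : l.Pairwise (· ≤ ·))
    (hmem : pp l ∈ dCoset a) (hlen : l.length = len (pp l))
    (hmin : ∀ w' ∈ dCoset a, len (pp l) ≤ len w') :
    ∀ l₁ l₂ l₃ : List ℕ, l = l₁ ++ l₂ ++ l₃ → ¬ IsBlock l₂ := by
  intro l₁ l₂ l₃ hl hblock
  obtain ⟨u, hu, v, hv, hw⟩ := hmem
  obtain ⟨G, hG, M, hM, hMlen, heq⟩ :=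
    key_lemma l.length l le_rfl hsort l₁ l₂ l₃ hl hblock
  have hw' : pp l * G ∈ dCoset a := by
    refine ⟨u * G, mul_mem hu hG, v, hv, ?_⟩
    rw [hw, mul_assoc, mul_assoc]
  have h1 := hmin _ hw'
  have h2 : len (pp l * G) ≤ M.length := by
    rw [heq]
    exact len_le_of_word M hM
  omega
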